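/- Let (G, B₁, B₂) be a Rota-Baxter system of groups. For a ∈ G set e_a = B₁(a)^{-1}·a·B₂(a)^{-1} and a† = B₁(a)^{-1}·e_a·B₂(a)^{-1}. Then B₁(a†) = B₁(a)^{-1} and B₂(a†) = B₂(a)^{-1} for all a ∈ G. -/
import Mathlib

theorem stmt_10 {G : Type*} [Group G] (B₁ B₂ : G → G)
    (h1 : ∀ a b : G, B₁ a * B₁ b = B₁ (B₁ a * b * B₂ a))
    (h2 : ∀ a b : G, B₂ b * B₂ a = B₂ (B₁ a * b * B₂ a)) :
    ∀ a : G,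
      B₁ ((B₁ a)⁻¹ * ((B₁ a)⁻¹ * a * (B₂ a)⁻¹) * (B₂ a)⁻¹) = (B₁ a)⁻¹ ∧
      B₂ ((B₁ a)⁻¹ * ((B₁ a)⁻¹ * a * (B₂ a)⁻¹) * (B₂ a)⁻¹) = (B₂ a)⁻¹ := by
  intro a
  set e := (B₁ a)⁻¹ * a * (B₂ a)⁻¹ with he
  set d := (B₁ a)⁻¹ * e * (B₂ a)⁻¹ with hd
  have hcancel : B₁ a * e * B₂ a = a := by rw [he]; group
  have he1 : B₁ e = 1 := by
    have k := h1 a e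
    rw [hcancel] at k
    exact mul_left_cancel (a := B₁ a) (by rw [mul_one, k])
  have he2 : B₂ e = 1 := by
    have k := h2 a e
    rw [hcancel] at k
    exact mul_right_cancel (b := B₂ a) (by rw [one_mul, k])
  have hcd : B₁ a * d * B₂ a = e := by rw [hd]; group
  constructor
  · have k := h1 a d
    rw [hcd, he1] at k
    exact eq_inv_of_mul_eq_one_right k
  · have k := h2 a d
    rw [hcd, he2] at k
    exact eq_inv_of_mul_eq_one_left k
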